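/- Let β ∈ (0,1), p ≥ 1, α ∈ (0,1) with 2 + (α-2)p > 0 and 1 + (β-1)p > 0, and let T > 0. Then ∫₀ᵀ (T-s)^{(α-1)p} ( ∫ₛᵀ |(T-v+ε)^β - (T-v)^β|^p dv ) ds → 0 as ε → 0⁺. -/

import Mathlib

open MeasureTheory Real Filter

lemma aux_rpow_add_le (x y b : ℝ) (hx : 0 ≤ x) (hy : 0 ≤ y) (hb0 : 0 ≤ b) (hb1 : b ≤ 1) :
    (x + y) ^ b ≤ x ^ b + y ^ b := by
  have h := NNReal.rpow_add_le_add_rpow x.toNNReal y.toNNReal hb0 hb1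
  rw [← NNReal.coe_le_coe] at h
  push_cast at h
  rwa [Real.coe_toNNReal x hx, Real.coe_toNNReal y hy] at h

/-- Condition `(C_p)(i)` for the kernel `g(u) = u^β`, `β ∈ (0,1)`: if `p ≥ 1`,
`α ∈ (0,1)`, `2 + (α-2)p > 0`, `1 + (β-1)p > 0` and `T > 0`, then
`∫₀ᵀ (T-s)^{(α-1)p} (∫ₛᵀ |(T-v+ε)^β - (T-v)^β|^p dv) ds → 0` as `ε → 0⁺`. -/
theorem stmt_15 (β p α T : ℝ) (hβ : β ∈ Set.Ioo (0:ℝ) 1) (hp : 1 ≤ p)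
    (hα : α ∈ Set.Ioo (0:ℝ) 1) (h1 : 0 < 2 + (α - 2) * p) (h2 : 0 < 1 + (β - 1) * p)
    (hT : 0 < T) :
    Tendsto (fun ε : ℝ => ∫ s in (0:ℝ)..T, (T - s) ^ ((α - 1) * p) *
        ∫ v in s..T, |(T - v + ε) ^ β - (T - v) ^ β| ^ p)
      (nhdsWithin 0 (Set.Ioi 0)) (nhds 0) := by
  obtain ⟨hβ0, hβ1⟩ := hβ
  obtain ⟨hα0, hα1⟩ := hα
  have hp0 : 0 < p := lt_of_lt_of_le one_pos hp
  set q : ℝ := (α - 1) * p + 1 with hq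
  have hq0 : 0 < q := by
    rcases eq_or_lt_of_le hp with h | h
    · simp only [hq, ← h]; nlinarith
    · nlinarith
  have hcontq : Continuous fun s : ℝ => (T - s) ^ q := by
    have h1 : Continuous fun x : ℝ => x ^ q := by
      rw [continuous_iff_continuousAt]
      intro x
      exact Real.continuousAt_rpow_const x q (Or.inr hq0.le)
    exact h1.comp (by continuity)
  have hCint : IntervalIntegrable (fun s : ℝ => (T - s) ^ q) volume 0 T :=
    hcontq.intervalIntegrable 0 T
  set C : ℝ := ∫ s in (0:ℝ)..T, (T - s) ^ q with hC
  have hC0 : 0 ≤ C := by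
    apply intervalIntegral.integral_nonneg hT.le
    intro u _
    exact Real.rpow_nonneg (by linarith [Set.mem_Icc.mp ‹u ∈ Set.Icc 0 T›]) q
  have hβp : 0 < β * p := mul_pos hβ0 hp0
  have key : ∀ ε : ℝ, ε ∈ Set.Ioi (0:ℝ) →
      ‖∫ s in (0:ℝ)..T, (T - s) ^ ((α - 1) * p) *
        ∫ v in s..T, |(T - v + ε) ^ β - (T - v) ^ β| ^ p‖ ≤ ε ^ (β * p) * C := by
    intro ε hε
    rw [Set.mem_Ioi] at hε
    have hεβp : 0 ≤ ε ^ (β * p) := Real.rpow_nonneg hε.le _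
    -- inner bound
    have inner : ∀ s ∈ Set.Ioc (0:ℝ) T,
        ‖∫ v in s..T, |(T - v + ε) ^ β - (T - v) ^ β| ^ p‖ ≤ ε ^ (β * p) * |T - s| := by
      intro s hs
      apply intervalIntegral.norm_integral_le_of_norm_le_const
      intro v hv
      rw [Set.uIoc_of_le hs.2] at hv
      have hTv : 0 ≤ T - v := by linarith [hv.2]
      have hd0 : 0 ≤ (T - v + ε) ^ β - (T - v) ^ β := by
        have := Real.rpow_le_rpow hTv (by linarith : T - v ≤ T - v + ε) hβ0.le
        linarith
      have hd1 : (T - v + ε) ^ β - (T - v) ^ β ≤ ε ^ β := by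
        have := aux_rpow_add_le (T - v) ε β hTv hε.le hβ0.le hβ1.le
        linarith
      have habs : |(T - v + ε) ^ β - (T - v) ^ β| ≤ ε ^ β := by
        rw [abs_of_nonneg hd0]; exact hd1
      have : |(T - v + ε) ^ β - (T - v) ^ β| ^ p ≤ (ε ^ β) ^ p :=
        Real.rpow_le_rpow (abs_nonneg _) habs hp0.le
      calc ‖|(T - v + ε) ^ β - (T - v) ^ β| ^ p‖
          = |(T - v + ε) ^ β - (T - v) ^ β| ^ p := by
            rw [Real.norm_eq_abs, abs_of_nonneg (Real.rpow_nonneg (abs_nonneg _) p)]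
        _ ≤ (ε ^ β) ^ p := this
        _ = ε ^ (β * p) := by rw [← Real.rpow_mul hε.le]
    have step : ‖∫ s in (0:ℝ)..T, (T - s) ^ ((α - 1) * p) *
        ∫ v in s..T, |(T - v + ε) ^ β - (T - v) ^ β| ^ p‖
        ≤ |∫ s in (0:ℝ)..T, ε ^ (β * p) * (T - s) ^ q| := by
      apply intervalIntegral.norm_integral_le_abs_of_norm_le _
        ((hcontq.intervalIntegrable 0 T).const_mul _)
      filter_upwards [MeasureTheory.ae_restrict_mem measurableSet_uIoc] with s hs
      rw [Set.uIoc_of_le hT.le] at hs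
      have hTs : 0 ≤ T - s := by linarith [hs.2]
      have ha : 0 ≤ (T - s) ^ ((α - 1) * p) := Real.rpow_nonneg hTs _
      calc ‖(T - s) ^ ((α - 1) * p) *
            ∫ v in s..T, |(T - v + ε) ^ β - (T - v) ^ β| ^ p‖
          = (T - s) ^ ((α - 1) * p) *
            ‖∫ v in s..T, |(T - v + ε) ^ β - (T - v) ^ β| ^ p‖ := by
            rw [norm_mul, Real.norm_eq_abs ((T - s) ^ ((α - 1) * p)), abs_of_nonneg ha]
        _ ≤ (T - s) ^ ((α - 1) * p) * (ε ^ (β * p) * |T - s|) := by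
            exact mul_le_mul_of_nonneg_left (inner s hs) ha
        _ = ε ^ (β * p) * ((T - s) ^ ((α - 1) * p) * (T - s)) := by
            rw [abs_of_nonneg hTs]; ring
        _ = ε ^ (β * p) * (T - s) ^ q := by
            rcases eq_or_lt_of_le hTs with h | h
            · rw [← h, Real.zero_rpow hq0.ne', Real.zero_rpow (by nlinarith : (α-1)*p ≠ 0)]
              ring
            · rw [hq, Real.rpow_add h, Real.rpow_one]
    calc ‖∫ s in (0:ℝ)..T, (T - s) ^ ((α - 1) * p) *
            ∫ v in s..T, |(T - v + ε) ^ β - (T - v) ^ β| ^ p‖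
        ≤ |∫ s in (0:ℝ)..T, ε ^ (β * p) * (T - s) ^ q| := step
      _ = ε ^ (β * p) * C := by
          rw [intervalIntegral.integral_const_mul, ← hC, abs_of_nonneg (by positivity)]
  have hlim : Tendsto (fun ε : ℝ => ε ^ (β * p) * C) (nhdsWithin 0 (Set.Ioi 0)) (nhds 0) := by
    have h0 : Tendsto (fun ε : ℝ => ε ^ (β * p)) (nhds 0) (nhds 0) := by
      have := (Real.continuousAt_rpow_const 0 (β * p) (Or.inr hβp.le)).tendsto
      rwa [Real.zero_rpow hβp.ne'] at this
    have := (h0.mono_left (nhdsWithin_le_nhds (s := Set.Ioi (0:ℝ)))).mul_const C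
    simpa using this
  exact squeeze_zero_norm' (Filter.eventually_of_mem self_mem_nhdsWithin key) hlim
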